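/- Let C be an abelian category admitting a derived category D(C), X an object of D(C), a ≤ b integers, and (φ_q)_{q∈ℤ} a family of endomorphisms of X in D(C) such that φ_q is the identity for every q ∉ [a,b] and such that the map H^q(φ_q) induced by φ_q on the q-th homology object is zero for every q ∈ ℤ. Then the composite endomorphism obtained by applying first φ_b, then φ_{b−1}, …, and finally φ_a (i.e. φ_b ≫ φ_{b−1} ≫ ⋯ ≫ φ_a in categorical composition notation) is the zero endomorphism of X. -/

import Mathlib

open CategoryTheory Category Limits DerivedCategory

universe w v u

/-- Given a family `φ : ℤ → (X ⟶ X)` of endomorphisms, `compFamily φ a n` is the composite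
`φ (a + n) ≫ φ (a + n - 1) ≫ ⋯ ≫ φ a`, i.e. the endomorphism obtained by applying first
`φ (a + n)`, then `φ (a + n - 1)`, …, and finally `φ a`. -/
def compFamily {D : Type*} [Category D] {X : D} (φ : ℤ → (X ⟶ X)) (a : ℤ) : ℕ → (X ⟶ X)
  | 0 => φ a
  | n + 1 => φ (a + (n + 1)) ≫ compFamily φ a n


namespace ChainTruncAux

section SC

variable {C : Type*} [Category C] [Abelian C]

lemma isIso_of_isZero {X Y : C} (hX : IsZero X) (hY : IsZero Y) (f : X ⟶ Y) : IsIso f := by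
  have : f = (hX.iso hY).hom := hX.eq_of_src _ _
  rw [this]; infer_instance

open ShortComplex in
lemma isIso_homologyMap_of_epi_of_isIso_cyclesMap {S₁ S₂ : ShortComplex C} (φ : S₁ ⟶ S₂)
    [Epi φ.τ₁] [IsIso (cyclesMap φ)] : IsIso (ShortComplex.homologyMap φ) := by
  have hk : S₂.toCycles ≫ inv (cyclesMap φ) ≫ S₁.homologyπ = 0 := by
    rw [← cancel_epi φ.τ₁, comp_zero, ← reassoc_of% (toCycles_naturality φ),
      IsIso.hom_inv_id_assoc, toCycles_comp_homologyπ]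
  refine ⟨S₂.descHomology (inv (cyclesMap φ) ≫ S₁.homologyπ) hk, ?_, ?_⟩
  · rw [← cancel_epi S₁.homologyπ, homologyπ_naturality_assoc, π_descHomology,
      IsIso.hom_inv_id_assoc, comp_id]
  · rw [← cancel_epi S₂.homologyπ, π_descHomology_assoc, assoc, homologyπ_naturality,
      IsIso.inv_hom_id_assoc, comp_id]

open ShortComplex in
lemma isIso_homologyMap_of_mono_of_isIso_opcyclesMap {S₁ S₂ : ShortComplex C} (φ : S₁ ⟶ S₂)
    [Mono φ.τ₃] [IsIso (opcyclesMap φ)] : IsIso (ShortComplex.homologyMap φ) := by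
  have hk : (S₂.homologyι ≫ inv (opcyclesMap φ)) ≫ S₁.fromOpcycles = 0 := by
    rw [← cancel_mono φ.τ₃, zero_comp, assoc, assoc, ← fromOpcycles_naturality φ,
      IsIso.inv_hom_id_assoc, homologyι_comp_fromOpcycles]
  refine ⟨S₁.liftHomology (S₂.homologyι ≫ inv (opcyclesMap φ)) hk, ?_, ?_⟩
  · rw [← cancel_mono S₁.homologyι, assoc, liftHomology_ι, id_comp, homologyι_naturality_assoc,
      IsIso.hom_inv_id, comp_id]
  · rw [← cancel_mono S₂.homologyι, assoc, homologyι_naturality, liftHomology_ι_assoc,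
      assoc, IsIso.inv_hom_id, comp_id, id_comp]

end SC


section TruncLE

variable {C : Type*} [Category C] [Abelian C]

open HomologicalComplex ZeroObject

variable (K : CochainComplex C ℤ) (q : ℤ)

/-- objects of the canonical truncation `τ_≤ q` -/
noncomputable def tX (i : ℤ) : C :=
  if i < q then K.X i else if i = q then K.cycles q else 0

noncomputable def tXIso {i : ℤ} (h : i < q) : tX K q i ≅ K.X i :=
  eqToIso (if_pos h)

noncomputable def tXIsoC {i : ℤ} (h : i = q) : tX K q i ≅ K.cycles q := by
  refine eqToIso ?_
  rw [tX, if_neg (by omega), if_pos h]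

lemma isZero_tX {i : ℤ} (h : q < i) : IsZero (tX K q i) := by
  rw [tX, if_neg (by omega), if_neg (by omega)]
  exact isZero_zero C

/-- the inclusion maps -/
noncomputable def ιf (i : ℤ) : tX K q i ⟶ K.X i :=
  if h : i < q then (tXIso K q h).hom
  else if h' : i = q then (tXIsoC K q h').hom ≫ K.iCycles q ≫ eqToHom (by rw [h'])
  else 0

lemma ιf_lt {i : ℤ} (h : i < q) : ιf K q i = (tXIso K q h).hom := dif_pos h

lemma ιf_q {i : ℤ} (h : i = q) :
    ιf K q i = (tXIsoC K q h).hom ≫ K.iCycles q ≫ eqToHom (by rw [h]) := by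
  rw [ιf, dif_neg (by omega), dif_pos h]

lemma ιf_zero {i : ℤ} (h : q < i) : ιf K q i = 0 := by
  rw [ιf, dif_neg (by omega), dif_neg (by omega)]

lemma isIso_ιf {i : ℤ} (h : i < q) : IsIso (ιf K q i) := by
  rw [ιf_lt K q h]; infer_instance

lemma mono_ιf {i : ℤ} (h : i ≤ q) : Mono (ιf K q i) := by
  rcases lt_or_eq_of_le h with h' | h'
  · have := isIso_ιf K q h'; infer_instance
  · rw [ιf_q K q h']; infer_instance

lemma ιf_d {i : ℤ} (j : ℤ) (h : ¬ i < q) : ιf K q i ≫ K.d i j = 0 := by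
  by_cases hiq : i = q
  · obtain rfl : q = i := hiq.symm
    rw [ιf_q K q rfl]
    simp
  · rw [ιf_zero K q (by omega), zero_comp]

noncomputable def td (i j : ℤ) : tX K q i ⟶ tX K q j :=
  if hij : i + 1 = j then
    if hj : j < q then ιf K q i ≫ K.d i j ≫ (tXIso K q hj).inv
    else if hj' : j = q then
      K.liftCycles (ιf K q i ≫ K.d i j ≫ eqToHom (by rw [hj'])) (q + 1)
        (by simp) (by subst hj'; simp [ιf_d]) ≫ (tXIsoC K q hj').inv
    else 0
  else 0

lemma td_ιf (i j : ℤ) : td K q i j ≫ ιf K q j = ιf K q i ≫ K.d i j := by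
  by_cases hij : i + 1 = j
  · by_cases hj : j < q
    · rw [td, dif_pos hij, dif_pos hj, ιf_lt K q hj]
      simp
    · by_cases hj' : j = q
      · rw [td, dif_pos hij, dif_neg hj, dif_pos hj', ιf_q K q hj']
        simp
      · rw [td, dif_pos hij, dif_neg hj, dif_neg hj', zero_comp]
        by_cases hi : i < q
        · omega
        · rw [ιf_d K q j hi]
  · rw [td, dif_neg hij, K.shape i j (by simpa using hij), comp_zero, zero_comp]

noncomputable def truncLE : CochainComplex C ℤ where
  X := tX K q
  d := td K q
  shape i j h := by rw [td, dif_neg (by simpa using h)]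
  d_comp_d' i j k _ _ := by
    rcases lt_or_ge q k with hk | hk
    · exact (isZero_tX K q hk).eq_of_tgt _ _
    · have : Mono (ιf K q k) := mono_ιf K q hk
      rw [← cancel_mono (ιf K q k), assoc, td_ιf, ← assoc, td_ιf, assoc, K.d_comp_d,
        comp_zero, zero_comp]

noncomputable def ιTrunc : truncLE K q ⟶ K where
  f := ιf K q
  comm' i j _ := (td_ιf K q i j).symm

lemma isZero_homology_truncLE {i : ℤ} (h : q < i) : IsZero ((truncLE K q).homology i) := by
  rw [← exactAt_iff_isZero_homology]
  exact ShortComplex.exact_of_isZero_X₂ _ (isZero_tX K q h)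

lemma quasiIsoAt_ιTrunc_q : QuasiIsoAt (ιTrunc K q) q := by
  rw [quasiIsoAt_iff_isIso_homologyMap]
  have hd : (truncLE K q).d q (q + 1) = 0 := (isZero_tX K q (by omega)).eq_of_tgt _ _
  have h1 : IsIso ((truncLE K q).iCycles q) := (truncLE K q).isIso_iCycles q (q + 1) (by simp) hd
  have h2 : cyclesMap (ιTrunc K q) q = (truncLE K q).iCycles q ≫ (tXIsoC K q rfl).hom := by
    rw [← cancel_mono (K.iCycles q), cyclesMap_i]
    show (truncLE K q).iCycles q ≫ ιf K q q = _
    rw [ιf_q K q rfl]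
    simp
    exact (assoc _ _ _).symm
  haveI h3 : IsIso (ShortComplex.cyclesMap
      ((shortComplexFunctor C (ComplexShape.up ℤ) q).map (ιTrunc K q))) := by
    show IsIso (cyclesMap (ιTrunc K q) q)
    rw [h2]; exact IsIso.comp_isIso' h1 (Iso.isIso_hom (tXIsoC K q rfl))
  haveI e1 : Epi (((shortComplexFunctor C (ComplexShape.up ℤ) q).map (ιTrunc K q)).τ₁) := by
    show Epi (ιf K q ((ComplexShape.up ℤ).prev q))
    have : IsIso (ιf K q ((ComplexShape.up ℤ).prev q)) :=
      isIso_ιf K q (by rw [CochainComplex.prev]; omega)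
    exact IsIso.epi_of_iso _
  exact isIso_homologyMap_of_epi_of_isIso_cyclesMap _

lemma quasiIsoAt_ιTrunc_of_le {i : ℤ} (h : i ≤ q) : QuasiIsoAt (ιTrunc K q) i := by
  rcases lt_or_eq_of_le h with h' | h'
  · rw [quasiIsoAt_iff' _ (i - 1) i (i + 1) (by simp) (by simp)]
    haveI e1 : IsIso (((shortComplexFunctor' C _ (i - 1) i (i + 1)).map (ιTrunc K q)).τ₁) :=
      isIso_ιf K q (by omega)
    haveI e1' : Epi (((shortComplexFunctor' C _ (i - 1) i (i + 1)).map (ιTrunc K q)).τ₁) :=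
      IsIso.epi_of_iso _
    haveI e2 : IsIso (((shortComplexFunctor' C _ (i - 1) i (i + 1)).map (ιTrunc K q)).τ₂) :=
      isIso_ιf K q h'
    haveI e3 : Mono (((shortComplexFunctor' C _ (i - 1) i (i + 1)).map (ιTrunc K q)).τ₃) :=
      mono_ιf K q (by omega)
    apply ShortComplex.quasiIso_of_epi_of_isIso_of_mono
  · obtain rfl : q = i := h'.symm
    exact quasiIsoAt_ιTrunc_q K q

lemma quasiIso_ιTrunc (hK : ∀ i, q < i → IsZero (K.homology i)) : QuasiIso (ιTrunc K q) where
  quasiIsoAt i := by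
    rcases le_or_gt i q with h | h
    · exact quasiIsoAt_ιTrunc_of_le K q h
    · rw [quasiIsoAt_iff_isIso_homologyMap]
      exact isIso_of_isZero (isZero_homology_truncLE K q h) (hK i h) _

end TruncLE
section TruncGE

variable {C : Type*} [Category C] [Abelian C]

open HomologicalComplex ZeroObject

variable (K : CochainComplex C ℤ) (q : ℤ)

/-- objects of the canonical truncation `τ_≥ q` -/
noncomputable def pX (i : ℤ) : C :=
  if q < i then K.X i else if i = q then K.opcycles q else 0

noncomputable def pXIso {i : ℤ} (h : q < i) : pX K q i ≅ K.X i :=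
  eqToIso (if_pos h)

noncomputable def pXIsoO {i : ℤ} (h : i = q) : pX K q i ≅ K.opcycles q := by
  refine eqToIso ?_
  rw [pX, if_neg (by omega), if_pos h]

lemma isZero_pX {i : ℤ} (h : i < q) : IsZero (pX K q i) := by
  rw [pX, if_neg (by omega), if_neg (by omega)]
  exact isZero_zero C

/-- the projection maps -/
noncomputable def πf (i : ℤ) : K.X i ⟶ pX K q i :=
  if h : q < i then (pXIso K q h).inv
  else if h' : i = q then eqToHom (by rw [h']) ≫ K.pOpcycles q ≫ (pXIsoO K q h').inv
  else 0

lemma πf_gt {i : ℤ} (h : q < i) : πf K q i = (pXIso K q h).inv := dif_pos h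

lemma πf_q {i : ℤ} (h : i = q) :
    πf K q i = eqToHom (by rw [h]) ≫ K.pOpcycles q ≫ (pXIsoO K q h).inv := by
  rw [πf, dif_neg (by omega), dif_pos h]

lemma πf_zero {i : ℤ} (h : i < q) : πf K q i = 0 := by
  rw [πf, dif_neg (by omega), dif_neg (by omega)]

lemma isIso_πf {i : ℤ} (h : q < i) : IsIso (πf K q i) := by
  rw [πf_gt K q h]; infer_instance

lemma epi_πf {i : ℤ} (h : q ≤ i) : Epi (πf K q i) := by
  rcases lt_or_eq_of_le h with h' | h'
  · have := isIso_πf K q h'; exact IsIso.epi_of_iso _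
  · rw [πf_q K q h'.symm]; infer_instance

lemma d_πf {i : ℤ} (j : ℤ) (h : ¬ q < j) : K.d i j ≫ πf K q j = 0 := by
  by_cases hjq : j = q
  · obtain rfl : q = j := hjq.symm
    rw [πf_q K q rfl]
    simp
  · rw [πf_zero K q (by omega), comp_zero]

noncomputable def pd (i j : ℤ) : pX K q i ⟶ pX K q j :=
  if hij : i + 1 = j then
    if hi : q < i then (pXIso K q hi).hom ≫ K.d i j ≫ (pXIso K q (by omega)).inv
    else if hi' : i = q then
      (pXIsoO K q hi').hom ≫ K.fromOpcycles q j ≫ (pXIso K q (by omega)).inv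
    else 0
  else 0

lemma πf_pd (i j : ℤ) : K.d i j ≫ πf K q j = πf K q i ≫ pd K q i j := by
  by_cases hij : i + 1 = j
  · by_cases hi : q < i
    · rw [pd, dif_pos hij, dif_pos hi, πf_gt K q hi, πf_gt K q (by omega)]
      simp
    · by_cases hi' : i = q
      · obtain rfl : q = i := hi'.symm
        rw [pd, dif_pos hij, dif_neg hi, dif_pos rfl, πf_q K q rfl, πf_gt K q (by omega)]
        simp
      · rw [pd, dif_pos hij, dif_neg hi, dif_neg hi', comp_zero]
        exact d_πf K q j (by omega)
  · rw [pd, dif_neg hij, K.shape i j (by simpa using hij), comp_zero, zero_comp]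

noncomputable def truncGE : CochainComplex C ℤ where
  X := pX K q
  d := pd K q
  shape i j h := by rw [pd, dif_neg (by simpa using h)]
  d_comp_d' i j k _ _ := by
    rcases lt_or_ge i q with hi | hi
    · exact (isZero_pX K q hi).eq_of_src _ _
    · have : Epi (πf K q i) := epi_πf K q hi
      rw [← cancel_epi (πf K q i), ← assoc, ← πf_pd, assoc, ← πf_pd, ← assoc, K.d_comp_d,
        zero_comp, comp_zero]

noncomputable def πTrunc : K ⟶ truncGE K q where
  f := πf K q
  comm' i j _ := (πf_pd K q i j).symm

lemma isZero_homology_truncGE {i : ℤ} (h : i < q) : IsZero ((truncGE K q).homology i) := by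
  rw [← exactAt_iff_isZero_homology]
  exact ShortComplex.exact_of_isZero_X₂ _ (isZero_pX K q h)

lemma quasiIsoAt_πTrunc_q : QuasiIsoAt (πTrunc K q) q := by
  rw [quasiIsoAt_iff_isIso_homologyMap]
  have hd : (truncGE K q).d (q - 1) q = 0 := (isZero_pX K q (by omega)).eq_of_src _ _
  have h1 : IsIso ((truncGE K q).pOpcycles q) :=
    (truncGE K q).isIso_pOpcycles (q - 1) q (by simp) hd
  have h2 : opcyclesMap (πTrunc K q) q = (pXIsoO K q rfl).inv ≫ (truncGE K q).pOpcycles q := by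
    rw [← cancel_epi (K.pOpcycles q), p_opcyclesMap]
    show πf K q q ≫ (truncGE K q).pOpcycles q = _
    rw [πf_q K q rfl]
    simp
    exact assoc _ _ _
  haveI h3 : IsIso (ShortComplex.opcyclesMap
      ((shortComplexFunctor C (ComplexShape.up ℤ) q).map (πTrunc K q))) := by
    show IsIso (opcyclesMap (πTrunc K q) q)
    rw [h2]; exact IsIso.comp_isIso' inferInstance h1
  haveI e3 : Mono (((shortComplexFunctor C (ComplexShape.up ℤ) q).map (πTrunc K q)).τ₃) := by
    show Mono (πf K q ((ComplexShape.up ℤ).next q))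
    have : IsIso (πf K q ((ComplexShape.up ℤ).next q)) :=
      isIso_πf K q (by rw [CochainComplex.next]; omega)
    exact IsIso.mono_of_iso _
  exact isIso_homologyMap_of_mono_of_isIso_opcyclesMap _

lemma quasiIsoAt_πTrunc_of_ge {i : ℤ} (h : q ≤ i) : QuasiIsoAt (πTrunc K q) i := by
  rcases lt_or_eq_of_le h with h' | h'
  · rw [quasiIsoAt_iff' _ (i - 1) i (i + 1) (by simp) (by simp)]
    haveI e1 : Epi (((shortComplexFunctor' C _ (i - 1) i (i + 1)).map (πTrunc K q)).τ₁) :=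
      epi_πf K q (by omega)
    haveI e2 : IsIso (((shortComplexFunctor' C _ (i - 1) i (i + 1)).map (πTrunc K q)).τ₂) :=
      isIso_πf K q h'
    haveI e3' : IsIso (((shortComplexFunctor' C _ (i - 1) i (i + 1)).map (πTrunc K q)).τ₃) :=
      isIso_πf K q (by omega)
    haveI e3 : Mono (((shortComplexFunctor' C _ (i - 1) i (i + 1)).map (πTrunc K q)).τ₃) :=
      IsIso.mono_of_iso _
    apply ShortComplex.quasiIso_of_epi_of_isIso_of_mono
  · obtain rfl : q = i := h'
    exact quasiIsoAt_πTrunc_q K q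

lemma quasiIso_πTrunc (hK : ∀ i, i < q → IsZero (K.homology i)) : QuasiIso (πTrunc K q) where
  quasiIsoAt i := by
    rcases le_or_gt q i with h | h
    · exact quasiIsoAt_πTrunc_of_ge K q h
    · rw [quasiIsoAt_iff_isIso_homologyMap]
      exact isIso_of_isZero (hK i h) (isZero_homology_truncGE K q h) _

end TruncGE

end ChainTruncAux
section Key

variable {C : Type*} [Category C] [Abelian C]

open HomologicalComplex

lemma chainMap_eq_zero (A M : CochainComplex C ℤ) (q : ℤ)
    (hA : ∀ i, q < i → IsZero (A.X i)) (hM : ∀ i, i < q → IsZero (M.X i))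
    (t : A ⟶ M) (ht : homologyMap t q = 0) : t = 0 := by
  ext i
  show t.f i = 0
  rcases lt_trichotomy i q with h | h | h
  · exact (hM i h).eq_of_tgt _ _
  · obtain rfl : q = i := h.symm
    haveI h1 : IsIso (A.iCycles q) :=
      A.isIso_iCycles q (q + 1) (by simp) ((hA (q + 1) (by omega)).eq_of_tgt _ _)
    haveI h2 : IsIso (M.homologyπ q) :=
      M.isIso_homologyπ (q - 1) q (by simp) ((hM (q - 1) (by omega)).eq_of_src _ _)
    have h3 : cyclesMap t q ≫ M.homologyπ q = 0 := by
      rw [← homologyπ_naturality, ht, comp_zero]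
    have h4 : cyclesMap t q = 0 := by
      rw [← cancel_mono (M.homologyπ q), h3, zero_comp]
    rw [← cancel_epi (A.iCycles q), comp_zero, ← cyclesMap_i, h4, zero_comp]
  · exact (hA i h).eq_of_src _ _

end Key

section Derived

variable {C : Type u} [Category.{v} C] [Abelian C] [HasDerivedCategory.{w} C]

open HomologicalComplex Pretriangulated

lemma map_zero_of_natIso {D₁ : Type*} {D₂ : Type*} [Category D₁] [Category D₂]
    [Limits.HasZeroMorphisms D₂]
    {F G : D₁ ⥤ D₂} (e : F ≅ G) {X Y : D₁} (f : X ⟶ Y) (h : F.map f = 0) :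
    G.map f = 0 := by
  have h2 := e.inv.naturality f
  rw [← cancel_mono (e.inv.app Y), h2, h, comp_zero, zero_comp]

/-- Core of the detection lemma, for morphisms between objects in the image of `Q`. -/
lemma detect_core (A M : CochainComplex C ℤ) (q : ℤ)
    (hA : ∀ i, q < i → IsZero (A.homology i)) (hM : ∀ i, i < q → IsZero (M.X i))
    (g : Q.obj A ⟶ Q.obj M) (hg : (homologyFunctor C q).map g = 0) : g = 0 := by
  classical
  letI W := (HomotopyCategory.subcategoryAcyclic C).trW
  let κ := quotientCompQhIso C
  let gh2 : Qh.obj ((HomotopyCategory.quotient C (ComplexShape.up ℤ)).obj A) ⟶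
      Qh.obj ((HomotopyCategory.quotient C (ComplexShape.up ℤ)).obj M) :=
    κ.hom.app A ≫ g ≫ κ.inv.app M
  obtain ⟨φ, hφ⟩ := Localization.exists_rightFraction Qh W gh2
  obtain ⟨s₀, hs₀⟩ := (HomotopyCategory.quotient C (ComplexShape.up ℤ)).map_surjective φ.s
  obtain ⟨t₀, ht₀⟩ := (HomotopyCategory.quotient C (ComplexShape.up ℤ)).map_surjective φ.f
  -- s₀ is a quasi-isomorphism
  have hs : QuasiIso s₀ := by
    rw [← HomologicalComplex.mem_quasiIso_iff, ← HomotopyCategory.quotient_map_mem_quasiIso_iff,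
      hs₀, HomotopyCategory.quasiIso_eq_subcategoryAcyclic_W]
    exact φ.hs
  -- homology of the source of the fraction vanishes above q
  have hA₂ : ∀ i, q < i → IsZero ((φ.X'.as).homology i) := fun i hi => by
    haveI : QuasiIsoAt s₀ i := hs.quasiIsoAt i
    have h' : IsIso (homologyMap s₀ i) := by rwa [← quasiIsoAt_iff_isIso_homologyMap]
    exact (hA i hi).of_iso (asIso (homologyMap s₀ i))
  -- the map induced by φ.f on q-th homology vanishes
  have hgh2 : (homologyFunctor C q).map gh2 = 0 := by
    dsimp only [gh2]
    rw [Functor.map_comp, Functor.map_comp, hg, zero_comp, comp_zero]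
  have hQhf : (homologyFunctor C q).map (Qh.map φ.f) = 0 := by
    have := φ.map_s_comp_map Qh (Localization.inverts Qh W)
    rw [← hφ] at this
    rw [← this, Functor.map_comp, hgh2, comp_zero]
  have ht₀q : homologyMap t₀ q = 0 := by
    have h1 : (Qh ⋙ homologyFunctor C q).map φ.f = 0 := hQhf
    have h2 : (HomotopyCategory.homologyFunctor C (ComplexShape.up ℤ) q).map φ.f = 0 :=
      map_zero_of_natIso (homologyFunctorFactorsh C q) φ.f h1
    rw [← ht₀] at h2
    have h3 : ((HomotopyCategory.quotient C (ComplexShape.up ℤ)) ⋙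
        HomotopyCategory.homologyFunctor C (ComplexShape.up ℤ) q).map t₀ = 0 := h2
    exact map_zero_of_natIso (HomotopyCategory.homologyFunctorFactors C (ComplexShape.up ℤ) q)
      t₀ h3
  -- truncate and conclude at the chain level
  have hu : ChainTruncAux.ιTrunc φ.X'.as q ≫ t₀ = 0 := by
    apply chainMap_eq_zero _ _ q (fun i hi => ChainTruncAux.isZero_tX _ q hi) hM
    rw [homologyMap_comp, ht₀q, comp_zero]
  haveI : QuasiIso (ChainTruncAux.ιTrunc φ.X'.as q) := ChainTruncAux.quasiIso_ιTrunc _ q hA₂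
  have hQι : IsIso (Q.map (ChainTruncAux.ιTrunc φ.X'.as q)) := inferInstance
  have hQt₀ : Q.map t₀ = 0 := by
    rw [← cancel_epi (Q.map (ChainTruncAux.ιTrunc φ.X'.as q)), ← Functor.map_comp, hu,
      Functor.map_zero, comp_zero]
  -- transfer back
  have hQhf0 : Qh.map φ.f = 0 := by
    rw [← ht₀]
    have := κ.hom.naturality t₀
    have h4 : Qh.map ((HomotopyCategory.quotient C (ComplexShape.up ℤ)).map t₀) =
        κ.hom.app φ.X'.as ≫ Q.map t₀ ≫ κ.inv.app M := by
      rw [← assoc, ← this]; simp [κ]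
    exact h4.trans (by simp [hQt₀]; rfl)
  have hgh20 : gh2 = 0 := by
    have h5 := φ.map_s_comp_map Qh (Localization.inverts Qh W)
    rw [← hφ, hQhf0] at h5
    haveI : IsIso (Qh.map φ.s) := Localization.inverts Qh W φ.s φ.hs
    rw [← cancel_epi (Qh.map φ.s), h5, comp_zero]
  have : g = κ.inv.app A ≫ gh2 ≫ κ.hom.app M := by
    dsimp only [gh2]
    simp
  rw [this, hgh20, zero_comp, comp_zero]

end Derived
section Derived2

variable {C : Type u} [Category.{v} C] [Abelian C] [HasDerivedCategory.{w} C]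

open HomologicalComplex Pretriangulated

lemma detect {S Y : DerivedCategory C} (q : ℤ) (f : S ⟶ Y)
    (hS : ∀ i, q < i → IsZero ((homologyFunctor C i).obj S))
    (hY : ∀ i, i < q → IsZero ((homologyFunctor C i).obj Y))
    (hf : (homologyFunctor C q).map f = 0) : f = 0 := by
  haveI : (Q (C := C)).EssSurj :=
    Localization.essSurj _ (HomologicalComplex.quasiIso C (ComplexShape.up ℤ))
  have eS : Q.obj (Q.objPreimage S) ≅ S := Q.objObjPreimageIso S
  have eY : Q.obj (Q.objPreimage Y) ≅ Y := Q.objObjPreimageIso Y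
  set A := Q.objPreimage S with hAdef
  set L := Q.objPreimage Y with hLdef
  have hL : ∀ i, i < q → IsZero (L.homology i) := fun i hi =>
    IsZero.of_iso (hY i hi)
      (((homologyFunctorFactors C i).app L).symm ≪≫ (homologyFunctor C i).mapIso eY)
  have hA : ∀ i, q < i → IsZero (A.homology i) := fun i hi =>
    IsZero.of_iso (hS i hi)
      (((homologyFunctorFactors C i).app A).symm ≪≫ (homologyFunctor C i).mapIso eS)
  let π := ChainTruncAux.πTrunc L q
  haveI : QuasiIso π := ChainTruncAux.quasiIso_πTrunc L q hL
  haveI : IsIso (Q.map π) := inferInstance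
  have hM : ∀ i, i < q → IsZero ((ChainTruncAux.truncGE L q).X i) := fun i hi =>
    ChainTruncAux.isZero_pX L q hi
  have hg : (homologyFunctor C q).map (eS.hom ≫ f ≫ eY.inv ≫ Q.map π) = 0 := by
    simp [Functor.map_comp, hf]
  have h0 := detect_core A (ChainTruncAux.truncGE L q) q hA hM
    (eS.hom ≫ f ≫ eY.inv ≫ Q.map π) hg
  have hfact : f = eS.inv ≫ (eS.hom ≫ f ≫ eY.inv ≫ Q.map π) ≫ inv (Q.map π) ≫ eY.hom := by
    simp
  rw [hfact, h0, zero_comp, comp_zero]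

lemma triangle_exists (X : DerivedCategory C) (q : ℤ) :
    ∃ (F T : DerivedCategory C) (m₁ : F ⟶ X) (m₂ : X ⟶ T) (m₃ : T ⟶ F⟦(1 : ℤ)⟧),
      (Triangle.mk m₁ m₂ m₃ ∈ distTriang (DerivedCategory C)) ∧
      (∀ i, q < i → IsZero ((homologyFunctor C i).obj F)) ∧
      (∀ i, i ≤ q → IsZero ((homologyFunctor C i).obj T)) := by
  haveI : (Q (C := C)).EssSurj :=
    Localization.essSurj _ (HomologicalComplex.quasiIso C (ComplexShape.up ℤ))
  have e : Q.obj (Q.objPreimage X) ≅ X := Q.objObjPreimageIso X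
  set K := Q.objPreimage X with hK
  let ι := ChainTruncAux.ιTrunc K q
  let m₁ : Q.obj (ChainTruncAux.truncLE K q) ⟶ X := Q.map ι ≫ e.hom
  obtain ⟨T, m₂, m₃, hT⟩ := Pretriangulated.distinguished_cocone_triangle m₁
  have hzF : ∀ i, q < i → IsZero ((homologyFunctor C i).obj (Q.obj (ChainTruncAux.truncLE K q))) :=
    fun i hi => IsZero.of_iso (ChainTruncAux.isZero_homology_truncLE K q hi)
      ((homologyFunctorFactors C i).app _)
  refine ⟨_, T, m₁, m₂, m₃, hT, hzF, ?_⟩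
  intro i hi
  have hm1iso : ∀ j, j ≤ q → IsIso ((homologyFunctor C j).map m₁) := fun j hj => by
    haveI : QuasiIsoAt ι j := ChainTruncAux.quasiIsoAt_ιTrunc_of_le K q hj
    have h1 : IsIso (HomologicalComplex.homologyMap ι j) := by
      rwa [← quasiIsoAt_iff_isIso_homologyMap]
    haveI h2 : IsIso ((homologyFunctor C j).map (Q.map ι)) :=
      (NatIso.isIso_map_iff (homologyFunctorFactors C j) ι).2 h1
    rw [show m₁ = Q.map ι ≫ e.hom from rfl, Functor.map_comp]
    infer_instance
  set T' := Triangle.mk m₁ m₂ m₃ with hT'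
  have hm2 : (homologyFunctor C i).map m₂ = 0 := by
    have hcomp : m₁ ≫ m₂ = 0 := comp_distTriang_mor_zero₁₂ T' hT
    have hc := congrArg (homologyFunctor C i).map hcomp
    rw [Functor.map_comp, Functor.map_zero] at hc
    haveI := hm1iso i hi
    rw [← cancel_epi ((homologyFunctor C i).map m₁), comp_zero]
    exact hc
  have hexact3 := HomologySequence.exact₃ T' hT i (i + 1) rfl
  have hmono : Mono (HomologySequence.δ T' i (i + 1) rfl) := hexact3.mono_g hm2
  have hδ0 : HomologySequence.δ T' i (i + 1) rfl = 0 := by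
    rcases lt_or_ge i q with hiq | hiq
    · have hc := HomologySequence.δ_comp T' hT i (i + 1) rfl
      haveI : IsIso ((DerivedCategory.homologyFunctor C (i + 1)).map T'.mor₁) :=
        hm1iso (i + 1) (by omega)
      rw [← cancel_mono ((DerivedCategory.homologyFunctor C (i + 1)).map T'.mor₁), zero_comp]
      exact hc
    · have hz : IsZero ((DerivedCategory.homologyFunctor C (i + 1)).obj T'.obj₁) := hzF (i + 1) (by omega)
      exact hz.eq_of_tgt _ _
  change IsZero ((homologyFunctor C i).obj T'.obj₃)
  rw [IsZero.iff_id_eq_zero, ← cancel_mono (HomologySequence.δ T' i (i + 1) rfl), id_comp,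
    zero_comp, hδ0]

end Derived2
section Main

variable {C : Type u} [Category.{v} C] [Abelian C] [HasDerivedCategory.{w} C]

open Pretriangulated

theorem compFamily_eq_zero_of_homology_map_eq_zero'
    (X : DerivedCategory C) (a b : ℤ) (hab : a ≤ b)
    (φ : ℤ → (X ⟶ X))
    (hid : ∀ q : ℤ, q ∉ Set.Icc a b → φ q = 𝟙 X)
    (hzero : ∀ q : ℤ, (homologyFunctor C q).map (φ q) = 0) :
    compFamily φ a (b - a).toNat = 0 := by
  have hX : ∀ i : ℤ, i < a ∨ b < i → IsZero ((homologyFunctor C i).obj X) := by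
    intro i hi
    have h := hzero i
    rw [hid i (by intro hmem; rw [Set.mem_Icc] at hmem; omega), CategoryTheory.Functor.map_id] at h
    rw [IsZero.iff_id_eq_zero]
    exact h
  have key : ∀ k : ℕ, ∃ (V : DerivedCategory C)
      (_ : ∀ i : ℤ, i < a + k + 1 → IsZero ((homologyFunctor C i).obj V))
      (j : X ⟶ V) (p : V ⟶ X), compFamily φ a k = j ≫ p := by
    intro k
    induction k with
    | zero =>
      obtain ⟨F, T, m₁, m₂, m₃, hdist, hF, hT⟩ := triangle_exists X a
      have hz : m₁ ≫ φ a = 0 :=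
        detect a (m₁ ≫ φ a) hF (fun i hi => hX i (Or.inl hi))
          (by rw [Functor.map_comp, hzero a, comp_zero])
      obtain ⟨p, hp⟩ := Triangle.yoneda_exact₂ _ hdist (φ a) hz
      exact ⟨T, fun i hi => hT i (by push_cast at hi; omega), m₂, p,
        by exact hp⟩
    | succ k ih =>
      obtain ⟨V, hV, j, p, hjp⟩ := ih
      obtain ⟨F, T, m₁, m₂, m₃, hdist, hF, hT⟩ := triangle_exists X (a + k + 1)
      have hz : m₁ ≫ (φ (a + k + 1) ≫ j) = 0 := by
        apply detect (a + k + 1) _ hF (fun i hi => hV i hi)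
        rw [Functor.map_comp, Functor.map_comp, hzero (a + k + 1), zero_comp, comp_zero]
      obtain ⟨p', hp'⟩ := Triangle.yoneda_exact₂ _ hdist (φ (a + k + 1) ≫ j) hz
      refine ⟨T, fun i hi => hT i (by push_cast at hi; omega), m₂, p' ≫ p, ?_⟩
      show φ (a + ((k : ℤ) + 1)) ≫ compFamily φ a k = m₂ ≫ p' ≫ p
      have harg : a + ((k : ℤ) + 1) = a + k + 1 := by ring
      rw [harg, hjp, ← assoc]
      exact (congrArg (· ≫ p) hp').trans (assoc _ _ _)
  obtain ⟨V, hV, j, p, hjp⟩ := key (b - a).toNat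
  have hcast : ((b - a).toNat : ℤ) = b - a := Int.toNat_of_nonneg (by omega)
  have hj : j = 0 := by
    apply detect (b + 1) j
    · intro i hi
      exact hX i (Or.inr (by omega))
    · intro i hi
      exact hV i (by omega)
    · exact (hX (b + 1) (Or.inr (by omega))).eq_of_src _ _
  rw [hjp, hj, zero_comp]

end Main

/-- The Remark following Lemma (actionphi): if `(φ_q)` is a family of endomorphisms of an
object `X` of the derived category, equal to the identity outside `[a,b]`, and each `φ_q`
induces the zero map on the `q`-th homology object, then the composite
`φ_b ≫ φ_{b-1} ≫ ⋯ ≫ φ_a` (applying first `φ_b`, finally `φ_a`) is zero. -/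
theorem compFamily_eq_zero_of_homology_map_eq_zero
    {C : Type u} [Category.{v} C] [Abelian C] [HasDerivedCategory.{w} C]
    (X : DerivedCategory C) (a b : ℤ) (hab : a ≤ b)
    (φ : ℤ → (X ⟶ X))
    (hid : ∀ q : ℤ, q ∉ Set.Icc a b → φ q = 𝟙 X)
    (hzero : ∀ q : ℤ, (homologyFunctor C q).map (φ q) = 0) :
    compFamily φ a (b - a).toNat = 0 :=
  compFamily_eq_zero_of_homology_map_eq_zero' X a b hab φ hid hzero
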